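/- arXiv:0704.1916 — 4 statements merged into one kernel-verified Lean document; each statement's English description precedes it below -/
import Mathlib

section
/- Let β > 0, γ > 0, δ > 0 be real and a ∈ ℝ. Then for all sufficiently large real s (in particular s > max((2|a|)^{1/β}, 0)), the Laplace transform of t ↦ t^{γ-1} E^δ_{β,γ}(a t^β) equals s^{-γ} (1 - a s^{-β})^{-δ}, i.e. ∫₀^∞ e^{-st} t^{γ-1} E^δ_{β,γ}(a t^β) dt = s^{-γ}(1 - a s^{-β})^{-δ}. -/
open MeasureTheory Real

/-- Prabhakar generalized Mittag-Leffler function (real argument). -/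
noncomputable def prabhakar (β γ δ : ℝ) (z : ℝ) : ℝ :=
  ∑' τ : ℕ, (ascPochhammer ℝ τ).eval δ * z ^ τ /
    (Real.Gamma (β * τ + γ) * (τ.factorial : ℝ))

open Filter in
lemma summable_poch (δ : ℝ) (hδ : 0 < δ) {x : ℝ} (hx : |x| < 1) (k : ℕ) :
    Summable (fun n : ℕ => (ascPochhammer ℝ (n + k)).eval δ * x ^ n / (n.factorial : ℝ)) := by
  rcases eq_or_ne x 0 with rfl | hx0
  · apply summable_of_ne_finset_zero (s := {0})
    intro n hn
    simp only [Finset.mem_singleton] at hn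
    simp [zero_pow hn]
  · have hPpos : ∀ m : ℕ, 0 < (ascPochhammer ℝ m).eval δ := fun m => ascPochhammer_pos m δ hδ
    apply summable_of_ratio_test_tendsto_lt_one hx (Filter.Eventually.of_forall ?_) ?_
    · intro n
      exact div_ne_zero (mul_ne_zero (hPpos _).ne' (pow_ne_zero _ hx0))
        (Nat.cast_ne_zero.2 n.factorial_ne_zero)
    · have key : ∀ n : ℕ,
          ‖(ascPochhammer ℝ (n + 1 + k)).eval δ * x ^ (n+1) / ((n+1).factorial : ℝ)‖ /
          ‖(ascPochhammer ℝ (n + k)).eval δ * x ^ n / (n.factorial : ℝ)‖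
          = (δ + k + n) / (n + 1) * |x| := by
        intro n
        have h1 : (ascPochhammer ℝ (n + 1 + k)).eval δ
            = (ascPochhammer ℝ (n + k)).eval δ * (δ + (n + k)) := by
          rw [show n + 1 + k = (n + k) + 1 by ring, ascPochhammer_succ_eval]
          push_cast
          ring
        rw [h1]
        rw [Real.norm_eq_abs, Real.norm_eq_abs, abs_div, abs_div, abs_mul, abs_mul, abs_mul,
          abs_pow, abs_pow, Nat.abs_cast, Nat.abs_cast,
          abs_of_pos (hPpos (n+k)), abs_of_pos (by positivity : (0:ℝ) < δ + (n + k)),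
          Nat.factorial_succ, pow_succ]
        have hfn : ((n.factorial : ℝ)) ≠ 0 := Nat.cast_ne_zero.2 n.factorial_ne_zero
        have hxn : |x| ^ n ≠ 0 := pow_ne_zero _ (abs_ne_zero.2 hx0)
        have hA : (ascPochhammer ℝ (n + k)).eval δ ≠ 0 := (hPpos (n+k)).ne'
        have hn1 : ((n:ℝ) + 1) ≠ 0 := by positivity
        push_cast
        field_simp
        ring
      rw [show (fun n : ℕ => ‖_‖/‖_‖) = _ from funext key]
      have h2 : Filter.Tendsto (fun n : ℕ => (δ + k + n) / ((n:ℝ) + 1)) atTop (nhds 1) := by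
        have e : (fun n : ℕ => (δ + k + n) / ((n:ℝ) + 1))
            = fun n : ℕ => (δ + k - 1) / ((n:ℝ) + 1) + 1 := by
          funext n
          have : ((n:ℝ) + 1) ≠ 0 := by positivity
          field_simp
          ring
        rw [e]
        have h3 : Filter.Tendsto (fun n : ℕ => ((n:ℝ) + 1)) atTop atTop :=
          Filter.tendsto_atTop_add_const_right _ 1 tendsto_natCast_atTop_atTop
        simpa using (Filter.Tendsto.div_atTop (tendsto_const_nhds (x := δ + k - 1)) h3).add
          (tendsto_const_nhds (x := (1:ℝ)))
      simpa using h2.mul_const |x|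

lemma binomial_tsum (δ : ℝ) (hδ : 0 < δ) {x : ℝ} (hx : |x| ≤ 1/2) :
    ∑' n : ℕ, (ascPochhammer ℝ n).eval δ * x ^ n / (n.factorial : ℝ) = (1 - x) ^ (-δ) := by
  classical
  set P : ℕ → ℝ := fun n => (ascPochhammer ℝ n).eval δ with hP
  have hPpos : ∀ m : ℕ, 0 < P m := fun m => ascPochhammer_pos m δ hδ
  set f : ℕ → ℝ → ℝ := fun n y => P n * y ^ n / (n.factorial : ℝ) with hf
  set f' : ℕ → ℝ → ℝ := fun n y => P n * ((n : ℝ) * y ^ (n - 1)) / (n.factorial : ℝ) with hf'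
  set u : ℕ → ℝ := fun n => P n * ((n : ℝ) * (3/4 : ℝ) ^ (n - 1)) / (n.factorial : ℝ) with hu
  set t : Set ℝ := Set.Ioo (-(3/4 : ℝ)) (3/4) with ht
  -- summability of u
  have hu_sum : Summable u := by
    rw [← summable_nat_add_iff 1]
    have : (fun n : ℕ => u (n + 1))
        = fun n : ℕ => (ascPochhammer ℝ (n + 1)).eval δ * (3/4 : ℝ) ^ n / (n.factorial : ℝ) := by
      funext n
      simp only [hu, hP, Nat.add_sub_cancel, Nat.factorial_succ]
      have h1 : ((n.factorial : ℝ)) ≠ 0 := Nat.cast_ne_zero.2 n.factorial_ne_zero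
      have h2 : ((n:ℝ) + 1) ≠ 0 := by positivity
      push_cast
      field_simp
    rw [this]
    exact summable_poch δ hδ (by rw [abs_of_nonneg] <;> norm_num) 1
  have htopen : IsOpen t := isOpen_Ioo
  have htconn : IsPreconnected t := (convex_Ioo _ _).isPreconnected
  have hg : ∀ n : ℕ, ∀ y : ℝ, y ∈ t → HasDerivAt (f n) (f' n y) y := by
    intro n y _
    simpa only [hf, hf'] using ((hasDerivAt_pow n y).const_mul (P n)).div_const (n.factorial : ℝ)
  have hg' : ∀ n : ℕ, ∀ y : ℝ, y ∈ t → ‖f' n y‖ ≤ u n := by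
    intro n y hy
    have hyabs : |y| ≤ 3/4 := by
      rw [abs_le]; exact ⟨hy.1.le, hy.2.le⟩
    simp only [hf', hu, Real.norm_eq_abs, abs_div, abs_mul, Nat.abs_cast, abs_pow,
      abs_of_pos (hPpos n)]
    gcongr
    all_goals first | exact (hPpos n).le | exact abs_nonneg y | exact hyabs | positivity
  have hg0 : Summable fun n => f n 0 := by
    apply summable_of_ne_finset_zero (s := {0})
    intro n hn
    simp only [Finset.mem_singleton] at hn
    simp [hf, zero_pow hn]
  have hmem0 : (0:ℝ) ∈ t := by constructor <;> norm_num
  -- the sum function and its derivative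
  set F : ℝ → ℝ := fun z => ∑' n, f n z with hF
  set D : ℝ → ℝ := fun y => ∑' n, f' n y with hD
  have hderiv : ∀ y ∈ t, HasDerivAt F (D y) y := fun y hy =>
    hasDerivAt_tsum_of_isPreconnected hu_sum htopen htconn hg hg' hmem0 hg0 hy
  have hsumf' : ∀ y ∈ t, Summable (fun n => f' n y) := fun y hy =>
    Summable.of_norm_bounded hu_sum (fun n => hg' n y hy)
  have hsumf : ∀ y : ℝ, |y| < 1 → Summable (fun n => f n y) := by
    intro y hy
    simpa [hf, hP] using summable_poch δ hδ hy 0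
  -- key ODE identity
  have key : ∀ y ∈ t, (1 - y) * D y = δ * F y := by
    intro y hy
    have hyabs : |y| < 1 := by
      rw [abs_lt]; exact ⟨by linarith [hy.1], by linarith [hy.2]⟩
    have hS : HasSum (fun n => f' n y) (D y) := (hsumf' y hy).hasSum
    have h10 : f' 0 y = 0 := by simp [hf']
    have h1 : HasSum (fun n => f' (n + 1) y) (D y) := by
      apply (hasSum_nat_add_iff (f := fun n => f' n y) 1).2
      simpa [h10] using hS
    have e1 : (fun n : ℕ => f' (n + 1) y) = fun n : ℕ => P (n + 1) * y ^ n / (n.factorial : ℝ) := by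
      funext n
      simp only [hf', Nat.add_sub_cancel, Nat.factorial_succ]
      have h1 : ((n.factorial : ℝ)) ≠ 0 := Nat.cast_ne_zero.2 n.factorial_ne_zero
      have h2 : ((n:ℝ) + 1) ≠ 0 := by positivity
      push_cast
      field_simp
    rw [e1] at h1
    have hFsum : HasSum (fun n => f n y) (F y) := (hsumf y hyabs).hasSum
    have h2 : HasSum (fun n => δ * f n y + y * f' n y) (δ * F y + y * D y) :=
      (hFsum.mul_left δ).add (hS.mul_left y)
    have e2 : (fun n : ℕ => δ * f n y + y * f' n y)
        = fun n : ℕ => P (n + 1) * y ^ n / (n.factorial : ℝ) := by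
      funext n
      have hrec : P (n + 1) = P n * (δ + n) := by
        simp only [hP]; rw [ascPochhammer_succ_eval]
      rw [hrec]
      rcases Nat.eq_zero_or_pos n with rfl | hn
      · simp [hf, hf', mul_comm]
      · have hyy : y ^ (n - 1) * y = y ^ n := by
          rw [← pow_succ]
          congr 1
          omega
        simp only [hf, hf']
        field_simp
        linear_combination (P n * (n:ℝ)) * hyy
    rw [e2] at h2
    have := h1.unique h2
    linarith [this]
  -- the function G = (1-y)^δ * F y has zero derivative on t
  set G : ℝ → ℝ := fun y => (1 - y) ^ δ * F y with hG
  have hGderiv : ∀ y ∈ t, HasDerivAt G 0 y := by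
    intro y hy
    have h1y : (0:ℝ) < 1 - y := by linarith [hy.2]
    have hd1 : HasDerivAt (fun z : ℝ => (1 - z) ^ δ) ((-1) * δ * (1 - y) ^ (δ - 1)) y := by
      have hbase : HasDerivAt (fun z : ℝ => 1 - z) (-1) y := (hasDerivAt_id y).const_sub 1
      exact hbase.rpow_const (Or.inl h1y.ne')
    have hd2 := (hd1.mul (hderiv y hy))
    have hpow : (1 - y) ^ δ = (1 - y) ^ (δ - 1) * (1 - y) := by
      rw [← Real.rpow_add_one h1y.ne']
      ring_nf
    have hzero : (-1) * δ * (1 - y) ^ (δ - 1) * F y + (1 - y) ^ δ * D y = 0 := by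
      rw [hpow]
      linear_combination (1 - y) ^ (δ - 1) * key y hy
    rw [hzero] at hd2
    exact hd2
  -- G is constant on [min x 0, max x 0]
  obtain ⟨hxlo, hxhi⟩ := abs_le.1 hx
  have hGx : G x = G 0 := by
    rcases le_or_gt 0 x with hx0 | hx0
    · have := constant_of_has_deriv_right_zero (f := G) (a := 0) (b := x)
        (fun y hy => (hGderiv y ⟨by linarith [hy.1],
          by linarith [hy.2]⟩).continuousAt.continuousWithinAt)
        (fun y hy => (hGderiv y ⟨by linarith [hy.1],
          by linarith [hy.2.le]⟩).hasDerivWithinAt)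
      exact this x ⟨hx0, le_refl x⟩
    · have := constant_of_has_deriv_right_zero (f := G) (a := x) (b := 0)
        (fun y hy => (hGderiv y ⟨by linarith [hy.1],
          by linarith [hy.2]⟩).continuousAt.continuousWithinAt)
        (fun y hy => (hGderiv y ⟨by linarith [hy.1],
          by linarith [hy.2.le]⟩).hasDerivWithinAt)
      exact (this 0 ⟨hx0.le, le_refl 0⟩).symm
  have hF0 : F 0 = 1 := by
    have e0 : F 0 = ∑' n : ℕ, f n 0 := rfl
    rw [e0, tsum_eq_single 0 (fun n hn => by simp [hf, zero_pow hn])]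
    simp [hf, hP]
  have hG0 : G 0 = 1 := by simp [hG, hF0]
  have h1x : (0:ℝ) < 1 - x := by
    rw [abs_le] at hx
    linarith [hx.2]
  have hGx1 : (1 - x) ^ δ * F x = 1 := hGx.trans hG0
  have hne : (1 - x) ^ δ ≠ 0 := (Real.rpow_pos_of_pos h1x δ).ne'
  have : F x = ((1 - x) ^ δ)⁻¹ := by
    field_simp
    linarith [hGx1]
  rw [show ∑' n : ℕ, (ascPochhammer ℝ n).eval δ * x ^ n / (n.factorial : ℝ) = F x from rfl, this,
    Real.rpow_neg h1x.le]

lemma integrableOn_rpow_mul_exp_neg {A s : ℝ} (hA : 0 < A) (hs : 0 < s) :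
    IntegrableOn (fun t : ℝ => t ^ (A - 1) * Real.exp (-(s * t))) (Set.Ioi 0) := by
  have h0 := Real.GammaIntegral_convergent hA
  have h1 : IntegrableOn (fun x : ℝ => Real.exp (-(s * x)) * (s * x) ^ (A - 1)) (Set.Ioi 0) := by
    have h2 := (integrableOn_Ioi_comp_mul_left_iff
      (fun x : ℝ => Real.exp (-x) * x ^ (A - 1)) 0 hs).2
    simpa using h2 (by simpa using h0)
  have h2 : IntegrableOn (fun x : ℝ => ((s : ℝ) ^ (A - 1))⁻¹ *
      (Real.exp (-(s * x)) * (s * x) ^ (A - 1))) (Set.Ioi 0) := h1.const_mul _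
  apply h2.congr_fun ?_ measurableSet_Ioi
  intro x hx
  have hx0 : (0:ℝ) < x := hx
  have hsA : s ^ (A - 1) ≠ 0 := (Real.rpow_pos_of_pos hs _).ne'
  simp only []
  rw [Real.mul_rpow hs.le hx0.le]
  field_simp

theorem laplace_prabhakar (β γ δ : ℝ) (hβ : 0 < β) (hγ : 0 < γ) (hδ : 0 < δ) (a : ℝ)
    (s : ℝ) (hs : max ((2 * |a|) ^ (1 / β)) 0 < s) :
    (∫ t in Set.Ioi (0:ℝ), Real.exp (-s * t) * (t ^ (γ - 1) * prabhakar β γ δ (a * t ^ β)))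
      = s ^ (-γ) * (1 - a * s ^ (-β)) ^ (-δ) := by
  have hs0 : (0:ℝ) < s := lt_of_le_of_lt (le_max_right _ _) hs
  have hsb : (0:ℝ) < s ^ β := Real.rpow_pos_of_pos hs0 β
  have hPpos : ∀ m : ℕ, 0 < (ascPochhammer ℝ m).eval δ := fun m => ascPochhammer_pos m δ hδ
  have hxle : |a| * (s ^ β)⁻¹ ≤ 1/2 := by
    rcases eq_or_ne a 0 with rfl | ha
    · norm_num
    · have h2a : (0:ℝ) < 2 * |a| := by positivity
      have h1 : (2 * |a|) ^ (1/β) < s := lt_of_le_of_lt (le_max_left _ _) hs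
      have h2 : ((2 * |a|) ^ (1/β)) ^ β < s ^ β :=
        Real.rpow_lt_rpow (Real.rpow_nonneg h2a.le _) h1 hβ
      have h3 : ((2 * |a|) ^ (1/β)) ^ β = 2 * |a| := by
        rw [← Real.rpow_mul h2a.le, one_div, inv_mul_cancel₀ hβ.ne', Real.rpow_one]
      rw [h3] at h2
      have ha0 : (0:ℝ) < |a| := abs_pos.2 ha
      rw [mul_inv_le_iff₀ hsb]
      nlinarith
  have hneg : s ^ (-β) = (s ^ β)⁻¹ := by
    rw [Real.rpow_neg hs0.le]
  have hxabs : |a * s ^ (-β)| ≤ 1/2 := by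
    rw [abs_mul, hneg, abs_inv, abs_of_pos hsb]
    exact hxle
  have hxabs' : |(|a| * (s ^ β)⁻¹)| < 1 := by
    rw [abs_of_nonneg (by positivity)]
    linarith
  have hΓpos : ∀ τ : ℕ, 0 < Real.Gamma (β * τ + γ) := fun τ =>
    Real.Gamma_pos_of_pos (by positivity)
  set c : ℕ → ℝ := fun τ => (ascPochhammer ℝ τ).eval δ * a ^ τ /
      (Real.Gamma (β * τ + γ) * (τ.factorial : ℝ)) with hc
  set Fn : ℕ → ℝ → ℝ := fun τ t => c τ * (t ^ (β * τ + γ - 1) * Real.exp (-(s * t))) with hFn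
  -- Step A: pointwise expansion of the integrand
  have stepA : Set.EqOn (fun t : ℝ => Real.exp (-s * t) * (t ^ (γ - 1) * prabhakar β γ δ (a * t ^ β)))
      (fun t : ℝ => ∑' τ : ℕ, Fn τ t) (Set.Ioi 0) := by
    intro t ht
    have ht0 : (0:ℝ) < t := ht
    simp only [prabhakar]
    rw [← tsum_mul_left, ← tsum_mul_left]
    apply tsum_congr
    intro τ
    have e1 : (a * t ^ β) ^ τ = a ^ τ * t ^ (β * τ) := by
      rw [mul_pow, ← Real.rpow_natCast (t ^ β) τ, ← Real.rpow_mul ht0.le]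
    have e2 : t ^ (γ - 1) * t ^ (β * τ) = t ^ (β * τ + γ - 1) := by
      rw [← Real.rpow_add ht0]
      ring_nf
    have hΓ : Real.Gamma (β * τ + γ) ≠ 0 := (hΓpos τ).ne'
    have hfact : ((τ.factorial : ℝ)) ≠ 0 := Nat.cast_ne_zero.2 τ.factorial_ne_zero
    simp only [hFn, hc]
    rw [e1, neg_mul, ← e2]
    field_simp
  rw [setIntegral_congr_fun measurableSet_Ioi stepA]
  -- Step B: integrability and summability
  have hint : ∀ τ : ℕ, Integrable (Fn τ) (volume.restrict (Set.Ioi 0)) := by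
    intro τ
    have h := integrableOn_rpow_mul_exp_neg (show (0:ℝ) < β * τ + γ by positivity) hs0
    exact h.const_mul (c τ)
  have habs : ∀ τ : ℕ, |c τ| = (ascPochhammer ℝ τ).eval δ * |a| ^ τ /
      (Real.Gamma (β * τ + γ) * (τ.factorial : ℝ)) := by
    intro τ
    simp only [hc]
    rw [abs_div, abs_mul, abs_mul, abs_pow, Nat.abs_cast, abs_of_pos (hPpos τ),
      abs_of_pos (hΓpos τ)]
  have hpow : ∀ τ : ℕ, (1/s) ^ (β * τ + γ) = s ^ (-γ) * ((s ^ β)⁻¹) ^ τ := by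
    intro τ
    have h1 : (1/s : ℝ) ^ (β * τ + γ) = (s ^ (β * (τ:ℝ) + γ))⁻¹ := by
      rw [one_div, Real.inv_rpow hs0.le]
    have h2 : s ^ (β * (τ:ℝ) + γ) = (s ^ β) ^ τ * s ^ γ := by
      rw [Real.rpow_add hs0, Real.rpow_mul hs0.le, Real.rpow_natCast]
    rw [h1, h2, mul_inv, ← inv_pow, Real.rpow_neg hs0.le]
    ring
  have hnormint : ∀ τ : ℕ, ∫ t in Set.Ioi (0:ℝ), ‖Fn τ t‖ =
      |c τ| * ((1/s) ^ (β * τ + γ) * Real.Gamma (β * τ + γ)) := by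
    intro τ
    have heq : Set.EqOn (fun t : ℝ => ‖Fn τ t‖)
        (fun t : ℝ => |c τ| * (t ^ (β * τ + γ - 1) * Real.exp (-(s * t)))) (Set.Ioi 0) := by
      intro t ht
      have ht0 : (0:ℝ) < t := ht
      simp only [hFn, Real.norm_eq_abs, abs_mul]
      rw [abs_of_nonneg (Real.rpow_nonneg ht0.le _), abs_of_pos (Real.exp_pos _)]
    rw [setIntegral_congr_fun measurableSet_Ioi heq, integral_const_mul,
      integral_rpow_mul_exp_neg_mul_Ioi (by positivity) hs0]
  have hsummable : Summable (fun τ : ℕ => ∫ t in Set.Ioi (0:ℝ), ‖Fn τ t‖) := by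
    apply Summable.congr ?_ (fun τ => (hnormint τ).symm)
    have base := (summable_poch δ hδ hxabs' 0).mul_left (s ^ (-γ))
    apply base.congr
    intro τ
    have hΓ : Real.Gamma (β * τ + γ) ≠ 0 := (hΓpos τ).ne'
    have hfact : ((τ.factorial : ℝ)) ≠ 0 := Nat.cast_ne_zero.2 τ.factorial_ne_zero
    rw [habs τ, hpow τ, Nat.add_zero, mul_pow]
    field_simp
  rw [← MeasureTheory.integral_tsum_of_summable_integral_norm hint hsummable]
  -- Step C: evaluate the integrals and sum the series
  have hint_eval : ∀ τ : ℕ, (∫ t in Set.Ioi (0:ℝ), Fn τ t)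
      = c τ * ((1/s) ^ (β * τ + γ) * Real.Gamma (β * τ + γ)) := by
    intro τ
    simp only [hFn]
    rw [integral_const_mul, integral_rpow_mul_exp_neg_mul_Ioi (by positivity) hs0]
  have final : ∀ τ : ℕ, (∫ t in Set.Ioi (0:ℝ), Fn τ t)
      = s ^ (-γ) * ((ascPochhammer ℝ τ).eval δ * (a * s ^ (-β)) ^ τ / (τ.factorial : ℝ)) := by
    intro τ
    have hΓ : Real.Gamma (β * τ + γ) ≠ 0 := (hΓpos τ).ne'
    have hfact : ((τ.factorial : ℝ)) ≠ 0 := Nat.cast_ne_zero.2 τ.factorial_ne_zero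
    rw [hint_eval τ, hpow τ, hneg, mul_pow]
    simp only [hc]
    field_simp
  rw [tsum_congr final, tsum_mul_left, binomial_tsum δ hδ hxabs]
end

section
/- Let ρ > 0, ν > 0, c > 0, n a positive integer, and N₀ ∈ ℝ. Then N(t) = N₀ Γ(ρ) t^{ρ-1} E^n_{ν,ρ}(-(ct)^ν) satisfies N(t) - N₀ t^{ρ-1} = -∑_{r=1}^n C(n,r) c^{rν} (₀D_t^{-rν} N)(t) for all t > 0. -/
open MeasureTheory Real

/-- Riemann–Liouville fractional integral of order ν. -/
noncomputable def rlInt (ν : ℝ) (f : ℝ → ℝ) (t : ℝ) : ℝ :=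
  (1 / Real.Gamma ν) * ∫ u in (0:ℝ)..t, (t - u) ^ (ν - 1) * f u

open Set Polynomial

lemma ascPoch_real (n j : ℕ) :
    (ascPochhammer ℝ j).eval (n : ℝ) = (n.ascFactorial j : ℝ) := by
  rw [← ascPochhammer_eval_cast ℝ, ascPochhammer_nat_eq_ascFactorial]

lemma comb_key (n k : ℕ) (hk : 0 < k) :
    ∑ r ∈ Finset.range (k+1), (k.choose r : ℝ) * (n.descFactorial r : ℝ) *
      ((-1)^(k-r) * (ascPochhammer ℝ (k-r)).eval (n:ℝ)) = 0 := by
  have h0 : (descPochhammer ℤ k).smeval ((n:ℝ) + (-(n:ℝ))) = 0 := by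
    rw [add_neg_cancel]
    rw [show (0:ℝ) = ((0:ℕ):ℝ) by norm_num, Polynomial.descPochhammer_smeval_eq_descFactorial]
    obtain ⟨m, rfl⟩ := Nat.exists_eq_succ_of_ne_zero hk.ne'
    simp
  rw [Ring.descPochhammer_smeval_add k (Commute.all _ _),
    Finset.Nat.sum_antidiagonal_eq_sum_range_succ_mk] at h0
  rw [← h0]
  apply Finset.sum_congr rfl
  intro r hr
  have h1 : (descPochhammer ℤ r).smeval ((n:ℝ)) = (n.descFactorial r : ℝ) :=
    Polynomial.descPochhammer_smeval_eq_descFactorial ..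
  have h2 : (descPochhammer ℤ (k-r)).smeval (-(n:ℝ))
      = (-1)^(k-r) * (ascPochhammer ℝ (k-r)).eval (n:ℝ) := by
    have := Polynomial.ascPochhammer_smeval_neg_eq_descPochhammer (-(n:ℝ)) (k-r)
    rw [neg_neg, Polynomial.ascPochhammer_smeval_eq_eval] at this
    rw [this]
    rcases Nat.even_or_odd (k-r) with he | ho
    · rw [Int.negOnePow_even _ (by exact_mod_cast he), he.neg_one_pow]; simp
    · rw [Int.negOnePow_odd _ (by exact_mod_cast ho), ho.neg_one_pow]; simp
  rw [h1, h2]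
  ring

lemma comb_div (n k : ℕ) (hk : 0 < k) :
    ∑ r ∈ Finset.range (k+1), (n.choose r : ℝ) *
      ((-1)^(k-r) * (ascPochhammer ℝ (k-r)).eval (n:ℝ) / (k-r).factorial) = 0 := by
  have hkf : (k.factorial : ℝ) ≠ 0 := by positivity
  have key : (k.factorial : ℝ) * (∑ r ∈ Finset.range (k+1), (n.choose r : ℝ) *
      ((-1)^(k-r) * (ascPochhammer ℝ (k-r)).eval (n:ℝ) / (k-r).factorial)) = 0 := by
    rw [Finset.mul_sum, ← comb_key n k hk]
    apply Finset.sum_congr rfl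
    intro r hr
    have hrk : r ≤ k := Nat.lt_succ_iff.mp (Finset.mem_range.mp hr)
    have e1 : (k.choose r) * r.factorial * (k-r).factorial = k.factorial :=
      Nat.choose_mul_factorial_mul_factorial hrk
    have e2 : (n.descFactorial r : ℝ) = (r.factorial : ℝ) * (n.choose r : ℝ) := by
      exact_mod_cast congrArg Nat.cast (Nat.descFactorial_eq_factorial_mul_choose n r)
    have e3 : ((k-r).factorial : ℝ) ≠ 0 := by positivity
    rw [e2, ← e1]
    push_cast
    field_simp
  exact (mul_eq_zero.mp key).resolve_left hkf

lemma comb_final (n k : ℕ) (hk : 0 < k) :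
    ∑ r ∈ Finset.Icc 1 n, (n.choose r : ℝ) *
      (if r ≤ k then (-1)^(k-r) * (ascPochhammer ℝ (k-r)).eval (n:ℝ) / (k-r).factorial else 0)
    = -((-1)^k * (ascPochhammer ℝ k).eval (n:ℝ) / k.factorial) := by
  set F : ℕ → ℝ := fun r => (n.choose r : ℝ) *
      (if r ≤ k then (-1)^(k-r) * (ascPochhammer ℝ (k-r)).eval (n:ℝ) / (k-r).factorial else 0)
  have h1 : ∑ r ∈ Finset.Icc 1 n, F r = ∑ r ∈ Finset.Icc 1 (max n k), F r := by
    apply Finset.sum_subset (Finset.Icc_subset_Icc_right (le_max_left n k))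
    intro r hr hnr
    have : n < r := by
      simp only [Finset.mem_Icc] at hr hnr
      omega
    simp [F, Nat.choose_eq_zero_of_lt this]
  have h2 : ∑ r ∈ Finset.Icc 1 k, F r = ∑ r ∈ Finset.Icc 1 (max n k), F r := by
    apply Finset.sum_subset (Finset.Icc_subset_Icc_right (le_max_right n k))
    intro r hr hnr
    have : k < r := by
      simp only [Finset.mem_Icc] at hr hnr
      omega
    simp [F, Nat.not_le.mpr this]
  have h3 : ∑ r ∈ Finset.Icc 1 k, F r
      = ∑ r ∈ Finset.Icc 1 k, (n.choose r : ℝ) *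
        ((-1)^(k-r) * (ascPochhammer ℝ (k-r)).eval (n:ℝ) / (k-r).factorial) := by
    apply Finset.sum_congr rfl
    intro r hr
    have : r ≤ k := (Finset.mem_Icc.mp hr).2
    simp [F, this]
  have h4 := comb_div n k hk
  rw [Finset.range_eq_Ico, Finset.sum_eq_sum_Ico_succ_bot (Nat.succ_pos k),
    Nat.succ_eq_add_one, Finset.Ico_add_one_right_eq_Icc] at h4
  rw [h1, ← h2, h3]
  simp only [Nat.sub_zero, Nat.choose_zero_right, Nat.cast_one, one_mul] at h4
  linarith

lemma Gamma_lb {A s : ℝ} (hA : 1 ≤ A) (hs : 1 ≤ s) :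
    A^(s-1) * Real.exp (-(A+1)) ≤ Real.Gamma s := by
  have hs0 : 0 < s := lt_of_lt_of_le one_pos hs
  have hA0 : 0 < A := lt_of_lt_of_le one_pos hA
  rw [Real.Gamma_eq_integral hs0]
  have hsub : Ioc A (A+1) ⊆ Ioi (0:ℝ) := fun x hx => lt_trans hA0 hx.1
  have hint : IntegrableOn (fun x => Real.exp (-x) * x ^ (s-1)) (Ioi (0:ℝ)) volume :=
    Real.GammaIntegral_convergent hs0
  have step1 : A^(s-1) * Real.exp (-(A+1))
      ≤ ∫ x in Ioc A (A+1), Real.exp (-x) * x ^ (s-1) := by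
    have := MeasureTheory.setIntegral_ge_of_const_le (μ := volume)
      (f := fun x => Real.exp (-x) * x ^ (s-1)) (s := Ioc A (A+1))
      (c := A^(s-1) * Real.exp (-(A+1))) measurableSet_Ioc
      (by simp) ?_ (hint.mono_set hsub)
    · have hvol : (volume (Ioc A (A+1))).toReal = 1 := by
        rw [Real.volume_Ioc]
        norm_num
      rw [Measure.real, hvol, one_smul] at this
      exact this
    · intro x hx
      have hx1 : A ≤ x := le_of_lt hx.1
      have hx2 : x ≤ A + 1 := hx.2
      have e1 : A^(s-1) ≤ x^(s-1) := Real.rpow_le_rpow hA0.le hx1 (by linarith)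
      have e2 : Real.exp (-(A+1)) ≤ Real.exp (-x) := Real.exp_le_exp.mpr (by linarith)
      calc A^(s-1) * Real.exp (-(A+1)) ≤ x^(s-1) * Real.exp (-x) := by
            apply mul_le_mul e1 e2 (Real.exp_pos _).le (Real.rpow_nonneg (by linarith) _)
        _ = Real.exp (-x) * x^(s-1) := mul_comm _ _
  refine le_trans step1 ?_
  apply MeasureTheory.setIntegral_mono_set (hint) ?_ (HasSubset.Subset.eventuallyLE hsub)
  filter_upwards [ae_restrict_mem measurableSet_Ioi] with x hx
  exact mul_nonneg (Real.exp_pos _).le (Real.rpow_nonneg (le_of_lt hx) _)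

lemma choose_le_two_pow' (m j : ℕ) : (m.choose j : ℝ) ≤ 2^m := by
  by_cases h : j ≤ m
  · have : m.choose j ≤ 2^m := by
      calc m.choose j ≤ ∑ i ∈ Finset.range (m+1), m.choose i :=
            Finset.single_le_sum (f := fun i => m.choose i) (fun i _ => Nat.zero_le _)
              (Finset.mem_range.mpr (Nat.lt_succ_of_le h))
        _ = 2^m := Nat.sum_range_choose m
    exact_mod_cast this
  · rw [Nat.choose_eq_zero_of_lt (Nat.not_le.mp h)]
    norm_num

set_option maxHeartbeats 2000000 in
lemma summable_ml (n : ℕ) {x ν : ℝ} (γ : ℝ) (hx : 0 ≤ x) (hν : 0 < ν) :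
    Summable (fun k : ℕ => (ascPochhammer ℝ k).eval (n:ℝ) / k.factorial * x^k
      / Real.Gamma (ν*k+γ)) := by
  set A : ℝ := max ((2*x+2) ^ (ν⁻¹)) 1 with hA
  have hA1 : 1 ≤ A := le_max_right _ _
  have hA0 : 0 < A := lt_of_lt_of_le one_pos hA1
  have hAν : 2*x+2 ≤ A^ν := by
    calc 2*x+2 = ((2*x+2) ^ (ν⁻¹))^ν := by
          rw [← Real.rpow_mul (by linarith), inv_mul_cancel₀ hν.ne', Real.rpow_one]
      _ ≤ A^ν := Real.rpow_le_rpow (Real.rpow_nonneg (by linarith) _) (le_max_left _ _) hν.le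
  have hAν0 : 0 < A^ν := Real.rpow_pos_of_pos hA0 ν
  set q : ℝ := 2*x / A^ν with hq
  have hq0 : 0 ≤ q := div_nonneg (by linarith) hAν0.le
  have hq1 : q < 1 := by
    rw [hq, div_lt_one hAν0]
    linarith
  set K : ℕ := ⌈(1-γ)/ν⌉₊ with hK
  have hKγ : ∀ m : ℕ, 1 ≤ ν * (m + K) + γ := by
    intro m
    have h1 : (1-γ)/ν ≤ K := Nat.le_ceil _
    have h2 : 1 - γ ≤ ν * K := by
      rw [div_le_iff₀ hν] at h1
      linarith [h1]
    have h3 : (0:ℝ) ≤ ν * m := by positivity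
    push_cast
    nlinarith
  set C : ℝ := 2^n * Real.exp (A+1) * A^(1-γ) with hC
  have hC0 : 0 ≤ C := by positivity
  rw [← summable_nat_add_iff K]
  refine Summable.of_nonneg_of_le ?_ ?_ ((summable_geometric_of_lt_one hq0 hq1).mul_left (C * q^K))
  · intro m
    have hΓ : 0 < Real.Gamma (ν*(m+K)+γ) := by
      have := Gamma_lb hA1 (hKγ m)
      have hpos : 0 < A^(ν*(m+K)+γ-1) * Real.exp (-(A+1)) := by positivity
      linarith
    have hnum : 0 ≤ (ascPochhammer ℝ (m+K)).eval (n:ℝ) / (m+K).factorial * x^(m+K) := by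
      rw [ascPoch_real]
      positivity
    push_cast
    positivity
  · intro m
    set k : ℕ := m + K with hk
    have hs1 : 1 ≤ ν * k + γ := by push_cast; exact_mod_cast hKγ m
    have hΓlb := Gamma_lb hA1 hs1
    have hΓ : 0 < Real.Gamma (ν*k+γ) := by
      have hpos : 0 < A^(ν*k+γ-1) * Real.exp (-(A+1)) := by positivity
      linarith
    -- numerator bound
    have hnum : (ascPochhammer ℝ k).eval (n:ℝ) / k.factorial ≤ 2^n * 2^k := by
      rw [ascPoch_real, Nat.ascFactorial_eq_factorial_mul_choose']
      rw [Nat.cast_mul, mul_comm, mul_div_assoc, div_self (by positivity : (k.factorial:ℝ) ≠ 0), mul_one]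
      calc ((n+k-1).choose k : ℝ) ≤ 2^(n+k-1) := choose_le_two_pow' _ _
        _ ≤ 2^(n+k) := by
            apply pow_le_pow_right₀ (by norm_num) (Nat.sub_le _ _)
        _ = 2^n * 2^k := pow_add 2 n k
    have hnum0 : 0 ≤ (ascPochhammer ℝ k).eval (n:ℝ) / k.factorial := by
      rw [ascPoch_real]; positivity
    -- Gamma denominator bound
    have hden : A^(ν*k) * A^(γ-1) * Real.exp (-(A+1)) ≤ Real.Gamma (ν*k+γ) := by
      rw [← Real.rpow_add hA0]
      have : ν*k+(γ-1) = ν*k+γ-1 := by ring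
      rw [this]
      exact hΓlb
    have hAνk : A^(ν*(k:ℕ)) = (A^ν)^(k:ℕ) := by
      rw [← Real.rpow_natCast (A^ν) k, ← Real.rpow_mul hA0.le]
    have hterm : (ascPochhammer ℝ k).eval (n:ℝ) / k.factorial * x^k / Real.Gamma (ν*k+γ)
        ≤ (C * q^K) * q^m := by
      have hxk : (0:ℝ) ≤ x^k := by positivity
      have h1 : (ascPochhammer ℝ k).eval (n:ℝ) / k.factorial * x^k ≤ 2^n * (2*x)^k := by
        calc (ascPochhammer ℝ k).eval (n:ℝ) / k.factorial * x^k ≤ (2^n * 2^k) * x^k :=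
              mul_le_mul_of_nonneg_right hnum hxk
          _ = 2^n * (2*x)^k := by rw [mul_pow]; ring
      have h2 : (ascPochhammer ℝ k).eval (n:ℝ) / k.factorial * x^k / Real.Gamma (ν*k+γ)
          ≤ 2^n * (2*x)^k / (A^(ν*k) * A^(γ-1) * Real.exp (-(A+1))) := by
        apply div_le_div₀ (by positivity) h1 (by positivity) hden
      refine h2.trans ?_
      rw [hAνk]
      have hrw : (2:ℝ)^n * (2*x)^k / ((A^ν)^(k:ℕ) * A^(γ-1) * Real.exp (-(A+1)))
          = (2^n * Real.exp (A+1) * A^(1-γ)) * q^k := by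
        rw [hq, div_pow, Real.exp_neg]
        rw [show A^(1-γ) = (A^(γ-1))⁻¹ by rw [← Real.rpow_neg hA0.le]; ring_nf]
        field_simp
      rw [hrw, hk, pow_add]
      simp only [hC]
      ring_nf
      try rfl
    exact hterm

lemma IntervalIntegrable.congr_uIcc {E : Type*} [NormedAddCommGroup E] {f g : ℝ → E} {a b : ℝ}
    (h : IntervalIntegrable f volume a b) (he : Set.EqOn f g (Set.uIcc a b)) :
    IntervalIntegrable g volume a b := by
  rw [intervalIntegrable_iff] at h ⊢
  exact h.congr_fun (he.mono Set.uIoc_subset_uIcc) measurableSet_uIoc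

lemma beta_intervalIntegrable {a b t : ℝ} (ha : 0 < a) (hb : 0 < b) (ht : 0 < t) :
    IntervalIntegrable (fun u => (t-u)^(b-1) * u^(a-1)) volume 0 t := by
  have hc : IntervalIntegrable
      (fun x : ℝ => (x:ℂ)^((a:ℂ)-1) * (1-(x:ℂ))^((b:ℂ)-1)) volume 0 1 :=
    Complex.betaIntegral_convergent (by simpa using ha) (by simpa using hb)
  have h01 : IntervalIntegrable (fun x : ℝ => x^(a-1) * (1-x)^(b-1)) volume 0 1 := by
    rw [intervalIntegrable_iff] at hc ⊢
    have h2 := hc.re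
    refine MeasureTheory.IntegrableOn.congr_fun h2 ?_ measurableSet_uIoc
    intro x hx
    rw [Set.uIoc_of_le (by norm_num : (0:ℝ) ≤ 1)] at hx
    have hx0 : 0 ≤ x := hx.1.le
    have hx1 : 0 ≤ 1 - x := by linarith [hx.2]
    simp only
    rw [show ((a:ℂ)-1) = ((a-1:ℝ):ℂ) by push_cast; ring,
      show ((b:ℂ)-1) = ((b-1:ℝ):ℂ) by push_cast; ring,
      show (1-(x:ℂ)) = ((1-x:ℝ):ℂ) by push_cast; ring,
      ← Complex.ofReal_cpow hx0, ← Complex.ofReal_cpow hx1, ← Complex.ofReal_mul]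
    simp
  have h3 : IntervalIntegrable (fun x : ℝ => (t⁻¹*x)^(a-1) * (1-t⁻¹*x)^(b-1)) volume 0 t := by
    have := h01.comp_mul_left (c := t⁻¹)
    simpa [ht.ne'] using this
  have h4 := h3.const_mul (t^(a-1) * t^(b-1))
  refine h4.congr_uIcc ?_
  intro u hu
  rw [Set.uIcc_of_le ht.le] at hu
  have hu0 : 0 ≤ u := hu.1
  have hut : 0 ≤ t - u := by linarith [hu.2]
  simp only
  have e1 : t⁻¹ * u = u / t := by ring
  have e2 : 1 - t⁻¹*u = (t-u)/t := by field_simp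
  rw [e2, e1, Real.div_rpow hu0 ht.le, Real.div_rpow hut ht.le]
  have hta : (t:ℝ)^(a-1) ≠ 0 := (Real.rpow_pos_of_pos ht _).ne'
  have htb : (t:ℝ)^(b-1) ≠ 0 := (Real.rpow_pos_of_pos ht _).ne'
  field_simp

lemma beta_value {a b t : ℝ} (ha : 0 < a) (hb : 0 < b) (ht : 0 < t) :
    ∫ u in Set.Ioc (0:ℝ) t, (t-u)^(b-1) * u^(a-1)
      = Real.Gamma a * Real.Gamma b / Real.Gamma (a+b) * t^(a+b-1) := by
  rw [← intervalIntegral.integral_of_le ht.le]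
  have hscaled := Complex.betaIntegral_scaled (a:ℂ) (b:ℂ) ht
  have hβ : (Complex.betaIntegral (a:ℂ) (b:ℂ))
      = ((Real.Gamma a * Real.Gamma b / Real.Gamma (a+b) : ℝ) : ℂ) := by
    have hg := Complex.Gamma_mul_Gamma_eq_betaIntegral
      (s := (a:ℂ)) (t := (b:ℂ)) (by simpa using ha) (by simpa using hb)
    have hne : ((Real.Gamma (a+b) : ℝ):ℂ) ≠ 0 := by
      exact_mod_cast (Real.Gamma_pos_of_pos (by linarith : (0:ℝ) < a+b)).ne'
    rw [show ((a:ℂ)+(b:ℂ)) = ((a+b:ℝ):ℂ) by push_cast; ring, Complex.Gamma_ofReal,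
      Complex.Gamma_ofReal, Complex.Gamma_ofReal] at hg
    rw [Complex.ofReal_div, Complex.ofReal_mul, eq_div_iff hne]
    linear_combination -hg
  have hlhs : ∫ x in (0:ℝ)..t, (x:ℂ)^((a:ℂ)-1) * ((t:ℂ)-(x:ℂ))^((b:ℂ)-1)
      = ((∫ u in (0:ℝ)..t, (t-u)^(b-1) * u^(a-1) : ℝ) : ℂ) := by
    rw [← intervalIntegral.integral_ofReal]
    apply intervalIntegral.integral_congr
    intro x hx
    rw [Set.uIcc_of_le ht.le] at hx
    have hx0 : 0 ≤ x := hx.1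
    have hxt : 0 ≤ t - x := by linarith [hx.2]
    simp only
    rw [show ((a:ℂ)-1) = ((a-1:ℝ):ℂ) by push_cast; ring,
      show ((b:ℂ)-1) = ((b-1:ℝ):ℂ) by push_cast; ring,
      show ((t:ℂ)-(x:ℂ)) = ((t-x:ℝ):ℂ) by push_cast; ring,
      ← Complex.ofReal_cpow hx0, ← Complex.ofReal_cpow hxt, ← Complex.ofReal_mul]
    push_cast
    ring
  rw [hlhs, hβ] at hscaled
  have hrhs : ((t:ℂ))^((a:ℂ)+(b:ℂ)-1) = ((t^(a+b-1) : ℝ) : ℂ) := by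
    rw [show ((a:ℂ)+(b:ℂ)-1) = ((a+b-1:ℝ):ℂ) by push_cast; ring, Complex.ofReal_cpow ht.le]
  rw [hrhs, ← Complex.ofReal_mul] at hscaled
  have := Complex.ofReal_injective hscaled
  rw [this]
  ring

lemma hpow1 {c t : ℝ} (ν : ℝ) (hc : 0 < c) (ht : 0 < t) (k : ℕ) :
    ((c*t)^ν)^k = c^(ν*k) * t^(ν*k) := by
  rw [← Real.rpow_natCast ((c*t)^ν) k, ← Real.rpow_mul (by positivity),
    Real.mul_rpow hc.le ht.le]

lemma N_expand {ρ ν c : ℝ} (hρ : 0 < ρ) (hν : 0 < ν) (hc : 0 < c) (n : ℕ) (N₀ : ℝ)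
    (N : ℝ → ℝ)
    (hN : N = fun t => N₀ * Real.Gamma ρ * t ^ (ρ - 1) * prabhakar ν ρ (n : ℝ) (-(c * t) ^ ν))
    (u : ℝ) (hu : 0 < u) :
    N u = ∑' τ : ℕ, (N₀ * Real.Gamma ρ * ((-1)^τ * (ascPochhammer ℝ τ).eval (n:ℝ) * c^(ν*τ)
      / (Real.Gamma (ν*τ+ρ) * τ.factorial))) * u^(ν*τ+ρ-1) := by
  rw [hN]
  simp only [prabhakar]
  rw [← tsum_mul_left]
  apply tsum_congr
  intro τ
  have e1 : (-(c*u)^ν)^τ = (-1)^τ * (c^(ν*τ) * u^(ν*τ)) := by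
    rw [neg_pow, hpow1 ν hc hu]
  have e2 : u^(ν*τ+ρ-1) = u^(ρ-1) * u^(ν*(τ:ℝ)) := by
    rw [← Real.rpow_add hu]
    ring_nf
  rw [e1, e2]
  have hΓ : Real.Gamma (ν*τ+ρ) ≠ 0 := (Real.Gamma_pos_of_pos (by positivity)).ne'
  have hf : (τ.factorial : ℝ) ≠ 0 := by positivity
  field_simp

lemma rlInt_term {ρ ν c : ℝ} (hρ : 0 < ρ) (hν : 0 < ν) (hc : 0 < c) (n : ℕ) (N₀ : ℝ)
    (N : ℝ → ℝ)
    (hN : N = fun s => N₀ * Real.Gamma ρ * s ^ (ρ - 1) * prabhakar ν ρ (n : ℝ) (-(c * s) ^ ν))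
    {t : ℝ} (ht : 0 < t) (r : ℕ) (hr : 0 < r) :
    c ^ ((r:ℝ)*ν) * rlInt ((r:ℝ)*ν) N t
      = ∑' τ : ℕ, ((-1)^τ * (ascPochhammer ℝ τ).eval (n:ℝ) / τ.factorial) *
          (N₀ * Real.Gamma ρ * ((c*t)^ν)^(τ+r) * t^(ρ-1) / Real.Gamma (ν*(τ+r)+ρ)) := by
  have hμ : 0 < (r:ℝ)*ν := by positivity
  set μ : ℝ := (r:ℝ)*ν with hμdef
  set P : ℕ → ℝ := fun j => (ascPochhammer ℝ j).eval (n:ℝ) with hP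
  have hP0 : ∀ j, 0 ≤ P j := by
    intro j; rw [hP]; simp only; rw [ascPoch_real]; positivity
  set D : ℕ → ℝ := fun τ => N₀ * Real.Gamma ρ * ((-1)^τ * P τ * c^(ν*τ)
      / (Real.Gamma (ν*τ+ρ) * τ.factorial)) with hD
  set F : ℕ → ℝ → ℝ := fun τ u => D τ * ((t-u)^(μ-1) * u^(ν*τ+ρ-1)) with hF
  have hΓ : ∀ s : ℝ, 0 < s → 0 < Real.Gamma s := fun s hs => Real.Gamma_pos_of_pos hs
  -- integrability of each term
  have hInt : ∀ τ : ℕ, IntegrableOn (F τ) (Ioc (0:ℝ) t) volume := by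
    intro τ
    exact ((beta_intervalIntegrable (a := ν*τ+ρ) (b := μ) (by positivity) hμ ht).1).const_mul _
  -- norm integrals
  have hNorm : ∀ τ : ℕ, ∫ u in Ioc (0:ℝ) t, ‖F τ u‖
      = |D τ| * (Real.Gamma (ν*τ+ρ) * Real.Gamma μ / Real.Gamma (ν*τ+ρ+μ) * t^(ν*τ+ρ+μ-1)) := by
    intro τ
    have : ∫ u in Ioc (0:ℝ) t, ‖F τ u‖
        = ∫ u in Ioc (0:ℝ) t, |D τ| * ((t-u)^(μ-1) * u^(ν*τ+ρ-1)) := by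
      apply setIntegral_congr_fun measurableSet_Ioc
      intro u hu
      have h1 : (0:ℝ) ≤ t - u := by linarith [hu.2]
      have h2 : (0:ℝ) ≤ u := hu.1.le
      simp only [hF, norm_mul, Real.norm_eq_abs]
      rw [abs_of_nonneg (Real.rpow_nonneg h1 _), abs_of_nonneg (Real.rpow_nonneg h2 _)]
    rw [this, MeasureTheory.integral_const_mul, beta_value (by positivity : (0:ℝ) < ν*τ+ρ) hμ ht]
  -- summability of the norm integrals
  have hsumnorm : Summable (fun τ : ℕ => ∫ u in Ioc (0:ℝ) t, ‖F τ u‖) := by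
    have hgeom := (summable_ml n (μ+ρ) (Real.rpow_nonneg (by positivity) ν : (0:ℝ) ≤ (c*t)^ν)
      hν).mul_left (|N₀| * Real.Gamma ρ * Real.Gamma μ * t^(ρ+μ-1))
    apply hgeom.congr
    intro τ
    rw [hNorm τ]
    have hDabs : |D τ| = |N₀| * Real.Gamma ρ * (P τ * c^(ν*τ)
        / (Real.Gamma (ν*τ+ρ) * τ.factorial)) := by
      rw [hD]
      simp only
      rw [abs_mul, abs_mul, abs_of_nonneg (hΓ ρ hρ).le]
      congr 1
      rw [abs_div, abs_mul, abs_mul, abs_pow, abs_neg, abs_one, one_pow, one_mul,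
        abs_of_nonneg (hP0 τ), abs_of_nonneg (Real.rpow_nonneg hc.le _),
        abs_of_nonneg (mul_nonneg (hΓ _ (by positivity)).le (by positivity))]
    rw [hDabs, hpow1 ν hc ht τ]
    have et : t^(ν*τ+ρ+μ-1) = t^(ν*τ) * t^(ρ+μ-1) := by
      rw [← Real.rpow_add ht]; congr 1; ring
    have eΓ : Real.Gamma (ν*τ+ρ+μ) = Real.Gamma (ν*τ+(μ+ρ)) := by congr 1; ring
    rw [et, eΓ]
    have h1 : Real.Gamma (ν*τ+ρ) ≠ 0 := (hΓ _ (by positivity)).ne'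
    have h2 : Real.Gamma (ν*τ+(μ+ρ)) ≠ 0 := (hΓ _ (by positivity)).ne'
    have h3 : (τ.factorial : ℝ) ≠ 0 := by positivity
    field_simp
    ring
  -- the interchange
  have hswap : ∑' τ : ℕ, ∫ u in Ioc (0:ℝ) t, F τ u
      = ∫ u in Ioc (0:ℝ) t, ∑' τ : ℕ, F τ u :=
    MeasureTheory.integral_tsum_of_summable_integral_norm hInt hsumnorm
  -- integrand identification
  have hintgr : ∫ u in Ioc (0:ℝ) t, (t-u)^(μ-1) * N u
      = ∫ u in Ioc (0:ℝ) t, ∑' τ : ℕ, F τ u := by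
    apply setIntegral_congr_fun measurableSet_Ioc
    intro u hu
    show (t-u)^(μ-1) * N u = ∑' τ : ℕ, F τ u
    rw [N_expand hρ hν hc n N₀ N hN u hu.1, ← tsum_mul_left]
    apply tsum_congr
    intro τ
    simp only [hF, hD, hP]
    ring
  -- value of each integral
  have hval : ∀ τ : ℕ, ∫ u in Ioc (0:ℝ) t, F τ u
      = D τ * (Real.Gamma (ν*τ+ρ) * Real.Gamma μ / Real.Gamma (ν*τ+ρ+μ) * t^(ν*τ+ρ+μ-1)) := by
    intro τ
    simp only [hF]
    rw [MeasureTheory.integral_const_mul, beta_value (by positivity : (0:ℝ) < ν*τ+ρ) hμ ht]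
  -- assemble
  rw [rlInt, intervalIntegral.integral_of_le ht.le, hintgr, ← hswap, ← tsum_mul_left,
    ← tsum_mul_left]
  apply tsum_congr
  intro τ
  rw [hval τ, hpow1 ν hc ht (τ+r)]
  push_cast
  have e1 : Real.Gamma (ν*((τ:ℝ)+(r:ℝ))+ρ) = Real.Gamma (ν*τ+ρ+μ) := by
    congr 1; rw [hμdef]; ring
  have e2 : c^(ν*((τ:ℝ)+(r:ℝ))) = c^(ν*(τ:ℝ)) * c^μ := by
    rw [← Real.rpow_add hc]; congr 1; rw [hμdef]; ring
  have e3 : t^(ν*((τ:ℝ)+(r:ℝ))) * t^(ρ-1) = t^(ν*τ+ρ+μ-1) := by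
    rw [← Real.rpow_add ht]; congr 1; rw [hμdef]; ring
  rw [e1, e2, ← e3]
  have h1 : Real.Gamma (ν*τ+ρ) ≠ 0 := (hΓ _ (by positivity)).ne'
  have h2 : Real.Gamma (ν*((τ:ℝ)+(r:ℝ))+ρ) ≠ 0 := by
    rw [e1]; exact (hΓ _ (by positivity)).ne'
  have h3 : (τ.factorial : ℝ) ≠ 0 := by positivity
  have h4 : Real.Gamma μ ≠ 0 := (hΓ _ hμ).ne'
  simp only [hD, hP]
  field_simp

theorem kinetic_power_solution (ρ ν c : ℝ) (hρ : 0 < ρ) (hν : 0 < ν) (hc : 0 < c)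
    (n : ℕ) (hn : 0 < n) (N₀ : ℝ)
    (N : ℝ → ℝ) (hN : N = fun t => N₀ * Real.Gamma ρ * t ^ (ρ - 1) * prabhakar ν ρ (n : ℝ) (-(c * t) ^ ν)) :
    ∀ t : ℝ, 0 < t →
      N t - N₀ * t ^ (ρ - 1)
        = -∑ r ∈ Finset.Icc 1 n, (n.choose r : ℝ) * c ^ ((r : ℝ) * ν) * rlInt ((r : ℝ) * ν) N t := by
  intro t ht
  have hΓ : ∀ s : ℝ, 0 < s → 0 < Real.Gamma s := fun s hs => Real.Gamma_pos_of_pos hs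
  set x : ℝ := (c*t)^ν with hxdef
  have hx : 0 ≤ x := Real.rpow_nonneg (by positivity) ν
  set P : ℕ → ℝ := fun j => (ascPochhammer ℝ j).eval (n:ℝ) with hP
  have hP0 : ∀ j, 0 ≤ P j := by
    intro j; rw [hP]; simp only; rw [ascPoch_real]; positivity
  set q : ℕ → ℝ := fun k => (-1)^k * P k / k.factorial with hq
  set W : ℕ → ℝ := fun k => N₀ * Real.Gamma ρ * x^k * t^(ρ-1) / Real.Gamma (ν*k+ρ) with hW
  -- absolute values of summands
  have habs : ∀ (γ : ℝ), 0 < γ → ∀ k : ℕ, |q k * (N₀ * Real.Gamma ρ * x^k * t^(ρ-1)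
      / Real.Gamma (ν*k+γ))| = (|N₀| * Real.Gamma ρ * t^(ρ-1)) *
      (P k / k.factorial * x^k / Real.Gamma (ν*k+γ)) := by
    intro γ hγ k
    have h1 : 0 < Real.Gamma (ν*k+γ) := hΓ _ (by positivity)
    rw [abs_mul]
    have hqk : |q k| = P k / k.factorial := by
      simp only [hq]
      rw [abs_div, abs_mul, abs_pow, abs_neg, abs_one, one_pow, one_mul,
        abs_of_nonneg (hP0 k), Nat.abs_cast]
    rw [hqk, abs_div, abs_of_nonneg h1.le, abs_mul, abs_mul, abs_mul,
      abs_of_nonneg (hΓ ρ hρ).le, abs_of_nonneg (pow_nonneg hx k),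
      abs_of_nonneg (Real.rpow_nonneg ht.le _)]
    field_simp
  -- summability of the basic series
  have hqW : Summable (fun k : ℕ => q k * W k) := by
    apply Summable.of_norm_bounded ((summable_ml n ρ hx hν).mul_left
      (|N₀| * Real.Gamma ρ * t^(ρ-1)))
    intro k
    have h := habs ρ hρ k
    simp only [hP] at h
    rw [Real.norm_eq_abs]
    simp only [hW]
    exact le_of_eq h
  -- summability of shifted series
  have hqWr : ∀ r : ℕ, Summable (fun τ : ℕ => q τ * W (τ+r)) := by
    intro r
    apply Summable.of_norm_bounded (((summable_ml n (ν*r+ρ) hx hν).mul_left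
      (|N₀| * Real.Gamma ρ * t^(ρ-1) * x^r)))
    intro τ
    rw [Real.norm_eq_abs]
    simp only [hW]
    have e1 : Real.Gamma (ν*((τ+r:ℕ):ℝ)+ρ) = Real.Gamma (ν*τ+(ν*r+ρ)) := by
      congr 1; push_cast; ring
    rw [e1, pow_add x τ r]
    have efold : q τ * (N₀ * Real.Gamma ρ * (x^τ * x^r) * t^(ρ-1) / Real.Gamma (ν*τ+(ν*r+ρ)))
        = (q τ * (N₀ * Real.Gamma ρ * x^τ * t^(ρ-1) / Real.Gamma (ν*τ+(ν*r+ρ)))) * x^r := by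
      ring
    rw [efold, abs_mul, abs_of_nonneg (pow_nonneg hx r)]
    have h := habs (ν*r+ρ) (by positivity) τ
    simp only [hP] at h
    rw [h]
    exact le_of_eq (by ring)
  -- reindexing function
  set Gf : ℕ → ℕ → ℝ := fun r k => if r ≤ k then q (k-r) * W k else 0 with hGf
  have hGfshift : ∀ r τ : ℕ, Gf r (τ+r) = q τ * W (τ+r) := by
    intro r τ
    simp only [hGf, Nat.le_add_left, if_true, Nat.add_sub_cancel]
  have hshift : ∀ r : ℕ, ∑' τ : ℕ, q τ * W (τ+r) = ∑' k : ℕ, Gf r k := by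
    intro r
    rw [← Function.Injective.tsum_eq (f := Gf r) (g := fun τ => τ + r)
      (add_left_injective r) ?_]
    · exact tsum_congr (fun τ => (hGfshift r τ).symm)
    · intro k hk
      rw [Function.mem_support] at hk
      by_cases h : r ≤ k
      · exact ⟨k - r, by show k - r + r = k; omega⟩
      · exfalso; apply hk; simp only [hGf, if_neg h]
  have hGsum : ∀ r : ℕ, Summable (Gf r) := by
    intro r
    refine (Function.Injective.summable_iff (f := Gf r) (g := fun τ => τ + r)
      (add_left_injective r) ?_).mp ?_
    · intro k hk
      by_cases h : r ≤ k
      · exact absurd ⟨k - r, by show k - r + r = k; omega⟩ hk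
      · simp only [hGf, if_neg h]
    · exact (hqWr r).congr (fun τ => (hGfshift r τ).symm)
  -- compute the RHS sum
  have hRHS : ∑ r ∈ Finset.Icc 1 n, (n.choose r : ℝ) * c ^ ((r : ℝ) * ν) * rlInt ((r : ℝ) * ν) N t
      = ∑' k : ℕ, (if k = 0 then 0 else -(q k * W k)) := by
    have step1 : ∀ r ∈ Finset.Icc 1 n,
        (n.choose r : ℝ) * c ^ ((r : ℝ) * ν) * rlInt ((r : ℝ) * ν) N t
        = ∑' k : ℕ, (n.choose r : ℝ) * Gf r k := by
      intro r hr
      have hr1 : 0 < r := (Finset.mem_Icc.mp hr).1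
      rw [mul_assoc, rlInt_term hρ hν hc n N₀ N hN ht r hr1]
      rw [show (∑' k : ℕ, (n.choose r : ℝ) * Gf r k)
          = (n.choose r : ℝ) * ∑' k : ℕ, Gf r k from tsum_mul_left, ← hshift r]
      congr 1
      apply tsum_congr
      intro τ
      simp only [hq, hW, hP, hxdef]
      congr 2
      push_cast
      ring
    rw [Finset.sum_congr rfl step1,
      ← Summable.tsum_finsetSum (fun r _ => (hGsum r).mul_left ((n.choose r : ℝ)))]
    apply tsum_congr
    intro k
    by_cases hk : k = 0
    · subst hk
      rw [if_pos rfl]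
      apply Finset.sum_eq_zero
      intro r hr
      have hr1 : 1 ≤ r := (Finset.mem_Icc.mp hr).1
      simp only [hGf, if_neg (by omega : ¬ (r ≤ 0)), mul_zero]
    · rw [if_neg hk]
      have hk1 : 0 < k := Nat.pos_of_ne_zero hk
      have step2 : ∀ r ∈ Finset.Icc 1 n, (n.choose r : ℝ) * Gf r k
          = ((n.choose r : ℝ) * (if r ≤ k then
              (-1)^(k-r) * (ascPochhammer ℝ (k-r)).eval (n:ℝ) / (k-r).factorial else 0)) * W k := by
        intro r hr
        simp only [hGf, hq, hP]
        split_ifs with h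
        · ring
        · ring
      rw [Finset.sum_congr rfl step2, ← Finset.sum_mul, comb_final n k hk1]
      simp only [hq, hP]
      ring
  -- compute N t
  have hNt : N t = ∑' k : ℕ, q k * W k := by
    rw [N_expand hρ hν hc n N₀ N hN t ht]
    apply tsum_congr
    intro k
    simp only [hq, hW, hP, hxdef]
    rw [hpow1 ν hc ht k]
    have e1 : t^(ν*(k:ℝ)+ρ-1) = t^(ν*(k:ℝ)) * t^(ρ-1) := by
      rw [← Real.rpow_add ht]; congr 1; ring
    rw [e1]
    have h1 : Real.Gamma (ν*k+ρ) ≠ 0 := (hΓ _ (by positivity)).ne'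
    have h2 : (k.factorial : ℝ) ≠ 0 := by positivity
    field_simp
  -- the zeroth coefficient
  have hW0 : q 0 * W 0 = N₀ * t^(ρ-1) := by
    simp only [hq, hW, hP]
    simp only [pow_zero, Nat.cast_zero, mul_zero, zero_add, Nat.factorial_zero, Nat.cast_one,
      ascPochhammer_zero, Polynomial.eval_one, mul_one]
    have h1 : Real.Gamma ρ ≠ 0 := (hΓ ρ hρ).ne'
    field_simp
  -- summability of the if-series
  set IF : ℕ → ℝ := fun k => if k = 0 then 0 else -(q k * W k) with hIF
  have hIFsum : Summable IF := by
    apply (summable_nat_add_iff 1).mp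
    apply ((summable_nat_add_iff 1).mpr hqW.neg).congr
    intro k
    simp only [hIF, Nat.succ_ne_zero, if_neg (Nat.succ_ne_zero k)]
  have hIFtsum : ∑' k : ℕ, IF k = -∑' k : ℕ, q (k+1) * W (k+1) := by
    rw [Summable.tsum_eq_zero_add hIFsum]
    simp only [hIF, if_pos rfl, zero_add]
    rw [← tsum_neg]
    apply tsum_congr
    intro k
    simp [Nat.succ_ne_zero]
  -- conclude
  rw [hNt, Summable.tsum_eq_zero_add hqW, hW0, hRHS]
  rw [show (∑' k : ℕ, (if k = 0 then 0 else -(q k * W k))) = ∑' k : ℕ, IF k from rfl, hIFtsum]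
  ring
end

section
/- For the classical Mittag-Leffler function E_ν with ν > 0 and c > 0, the function N(t) = N₀ E_ν(-c^ν t^ν) satisfies the Volterra integral equation N(t) - N₀ = -c^ν (₀D_t^{-ν} N)(t) for all t ≥ 0 (the case f(t) = 1 of the Hille–Tamarkin result). -/
open MeasureTheory Real
open Filter

/-- Classical Mittag-Leffler function (real argument). -/
noncomputable def mittagLeffler (ν : ℝ) (z : ℝ) : ℝ :=
  ∑' k : ℕ, z ^ k / Real.Gamma (ν * k + 1)

lemma beta_real {p q t : ℝ} (hp : 0 < p) (hq : 0 < q) (ht : 0 < t) :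
    ∫ u in (0:ℝ)..t, u ^ (p - 1) * (t - u) ^ (q - 1)
      = Real.Gamma p * Real.Gamma q / Real.Gamma (p + q) * t ^ (p + q - 1) := by
  have key := Complex.betaIntegral_scaled (p : ℂ) (q : ℂ) ht
  have hG := Complex.Gamma_mul_Gamma_eq_betaIntegral
      (s := (p:ℂ)) (t := (q:ℂ)) (by simpa using hp) (by simpa using hq)
  have hGne : Complex.Gamma ((p:ℂ) + q) ≠ 0 := by
    rw [← Complex.ofReal_add, Complex.Gamma_ofReal]
    exact_mod_cast (Real.Gamma_pos_of_pos (by linarith)).ne'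
  have hbeta : Complex.betaIntegral p q
      = Complex.Gamma p * Complex.Gamma q / Complex.Gamma ((p:ℂ)+q) := by
    rw [eq_div_iff hGne]; linear_combination -hG
  have hcongr : ∫ x in (0:ℝ)..t, (x:ℂ) ^ ((p:ℂ) - 1) * ((t:ℂ) - x) ^ ((q:ℂ) - 1)
      = ∫ x in (0:ℝ)..t, (((x ^ (p-1) * (t - x) ^ (q-1) : ℝ)) : ℂ) := by
    refine intervalIntegral.integral_congr (fun x hx => ?_)
    rw [Set.uIcc_of_le ht.le] at hx
    rw [show ((p:ℂ) - 1) = ((p - 1 : ℝ) : ℂ) by push_cast; ring,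
      show ((q:ℂ) - 1) = ((q - 1 : ℝ) : ℂ) by push_cast; ring,
      show ((t:ℂ) - (x:ℂ)) = ((t - x : ℝ) : ℂ) by push_cast; ring,
      ← Complex.ofReal_cpow hx.1, ← Complex.ofReal_cpow (by linarith [hx.2]),
      ← Complex.ofReal_mul]
  rw [hcongr, intervalIntegral.integral_ofReal, hbeta] at key
  have h2 : ((t:ℂ) ^ ((p:ℂ) + ↑q - 1) * (Complex.Gamma ↑p * Complex.Gamma ↑q / Complex.Gamma (↑p + ↑q)))
      = ((Gamma p * Gamma q / Gamma (p + q) * t ^ (p + q - 1) : ℝ) : ℂ) := by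
    push_cast [Complex.ofReal_cpow ht.le, Complex.Gamma_ofReal]
    rw [show Complex.Gamma ((p:ℂ) + ↑q) = ((Real.Gamma (p + q) : ℝ) : ℂ) by
      rw [← Complex.ofReal_add, Complex.Gamma_ofReal]]
    ring
  rw [h2] at key
  exact_mod_cast key

lemma beta_integrableOn {p q t : ℝ} (hp : 0 < p) (hq : 0 < q) (ht : 0 < t) :
    IntegrableOn (fun u : ℝ => u ^ (p - 1) * (t - u) ^ (q - 1)) (Set.Ioc 0 t) := by
  have h := Complex.betaIntegral_convergent (u := (p:ℂ)) (v := (q:ℂ))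
    (by simpa using hp) (by simpa using hq)
  have h2 := h.comp_mul_right (c := t⁻¹)
  rw [zero_div, one_div, inv_inv] at h2
  have h3 : IntegrableOn
      (fun u : ℝ => ((((u * t⁻¹ : ℝ)):ℂ) ^ ((p:ℂ) - 1) * ((1:ℂ) - ((u * t⁻¹ : ℝ):ℂ)) ^ ((q:ℂ) - 1)).re)
      (Set.Ioc 0 t) := h2.1.re
  have h4 : IntegrableOn
      (fun u : ℝ => (t ^ (p - 1) * t ^ (q - 1)) *
        ((((u * t⁻¹ : ℝ)):ℂ) ^ ((p:ℂ) - 1) * ((1:ℂ) - ((u * t⁻¹ : ℝ):ℂ)) ^ ((q:ℂ) - 1)).re)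
      (Set.Ioc 0 t) := h3.const_mul _
  refine h4.congr_fun (fun u hu => ?_) measurableSet_Ioc
  symm
  beta_reduce
  have hu0 : 0 < u := hu.1
  have hut : u ≤ t := hu.2
  have hx0 : 0 ≤ u * t⁻¹ := by positivity
  have hx1 : u * t⁻¹ ≤ 1 := by
    rw [mul_inv_le_iff₀ ht, one_mul]; exact hut
  rw [show ((p:ℂ) - 1) = ((p - 1 : ℝ) : ℂ) by push_cast; ring,
    show ((q:ℂ) - 1) = ((q - 1 : ℝ) : ℂ) by push_cast; ring,
    show ((1:ℂ) - ((u * t⁻¹ : ℝ):ℂ)) = ((1 - u * t⁻¹ : ℝ) : ℂ) by push_cast; ring,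
    ← Complex.ofReal_cpow hx0, ← Complex.ofReal_cpow (by linarith), ← Complex.ofReal_mul,
    Complex.ofReal_re]
  have e1 : (1 : ℝ) - u * t⁻¹ = (t - u) * t⁻¹ := by field_simp
  rw [e1, Real.mul_rpow hu0.le (inv_nonneg.2 ht.le),
    Real.mul_rpow (by linarith : (0:ℝ) ≤ t - u) (inv_nonneg.2 ht.le),
    Real.inv_rpow ht.le, Real.inv_rpow ht.le]
  have hp1 : t ^ (p - 1) ≠ 0 := (Real.rpow_pos_of_pos ht _).ne'
  have hq1 : t ^ (q - 1) ≠ 0 := (Real.rpow_pos_of_pos ht _).ne'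
  field_simp

lemma Gamma_add_ge {s μ : ℝ} (hs : 2 ≤ s) (hμ0 : 0 < μ) (hμ1 : μ ≤ 1) :
    Real.Gamma s * (s - 1 + μ) ^ μ ≤ Real.Gamma (s + μ) := by
  have h1 : (0:ℝ) < s - 1 + μ := by linarith
  have hΓs : 0 < Real.Gamma s := Real.Gamma_pos_of_pos (by linarith)
  have hΓsμ : 0 < Real.Gamma (s + μ) := Real.Gamma_pos_of_pos (by linarith)
  have hΓm : 0 < Real.Gamma (s - 1 + μ) := Real.Gamma_pos_of_pos h1
  have hconv := Real.convexOn_log_Gamma.2 (Set.mem_Ioi.mpr h1)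
      (Set.mem_Ioi.mpr (show (0:ℝ) < s + μ by linarith)) hμ0.le
      (by linarith : (0:ℝ) ≤ 1 - μ) (by ring)
  have harg : μ • (s - 1 + μ) + (1 - μ) • (s + μ) = s := by
    simp only [smul_eq_mul]; ring
  rw [harg] at hconv
  simp only [Function.comp_apply, smul_eq_mul] at hconv
  have e1 : Real.Gamma (s - 1 + μ) = Real.Gamma (s + μ) / (s - 1 + μ) := by
    have h := Real.Gamma_add_one h1.ne'
    rw [show s - 1 + μ + 1 = s + μ by ring] at h
    field_simp [h]
    exact h.symm
  rw [e1, Real.log_div hΓsμ.ne' h1.ne'] at hconv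
  have key : Real.log (Real.Gamma s) + μ * Real.log (s - 1 + μ) ≤ Real.log (Real.Gamma (s + μ)) := by
    nlinarith [hconv]
  calc Real.Gamma s * (s - 1 + μ) ^ μ
      = Real.exp (Real.log (Real.Gamma s) + μ * Real.log (s - 1 + μ)) := by
        rw [Real.exp_add, Real.exp_log hΓs, Real.rpow_def_of_pos h1, mul_comm μ]
    _ ≤ Real.exp (Real.log (Real.Gamma (s + μ))) := Real.exp_le_exp.2 key
    _ = Real.Gamma (s + μ) := Real.exp_log hΓsμ

lemma ml_summable {ν b : ℝ} (hν : 0 < ν) (hb : 1 ≤ b) {x : ℝ} (hx : 0 ≤ x) :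
    Summable (fun k : ℕ => x ^ k / Real.Gamma (ν * k + b)) := by
  set μ := min ν 1 with hμdef
  have hμ0 : 0 < μ := lt_min hν one_pos
  have hμ1 : μ ≤ 1 := min_le_right _ _
  set M : ℝ := max 1 ((2 * x) ^ (1 / μ)) with hM
  refine summable_of_ratio_norm_eventually_le (r := 1/2) (by norm_num) ?_
  have hev : ∀ᶠ k : ℕ in atTop, M ≤ ν * k := by
    rw [eventually_atTop]
    refine ⟨⌈M / ν⌉₊, fun k hk => ?_⟩
    have h1 : M / ν ≤ (⌈M / ν⌉₊ : ℝ) := Nat.le_ceil _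
    have h2 : (⌈M / ν⌉₊ : ℝ) ≤ (k : ℝ) := Nat.cast_le.2 hk
    calc M = ν * (M / ν) := by field_simp
    _ ≤ ν * k := by apply mul_le_mul_of_nonneg_left (by linarith) hν.le
  filter_upwards [hev] with k hk
  have hνk1 : (1:ℝ) ≤ ν * k := le_trans (le_max_left _ _) hk
  have hs2 : (2:ℝ) ≤ ν * k + b := by linarith
  -- main Gamma estimate
  have h2x : 2 * x ≤ (ν * k) ^ μ := by
    calc 2 * x = ((2 * x) ^ (1 / μ)) ^ μ := by
          rw [← Real.rpow_mul (by linarith : (0:ℝ) ≤ 2 * x), one_div,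
            inv_mul_cancel₀ hμ0.ne', Real.rpow_one]
    _ ≤ M ^ μ := Real.rpow_le_rpow (Real.rpow_nonneg (by linarith) _) (le_max_right _ _) hμ0.le
    _ ≤ (ν * k) ^ μ := Real.rpow_le_rpow (le_trans zero_le_one (le_max_left _ _)) hk hμ0.le
  have hmono := Real.Gamma_strictMonoOn_Ici.monotoneOn
  have hΓ1 : Real.Gamma (ν * k + b + μ) ≤ Real.Gamma (ν * (k+1) + b) := by
    apply hmono (by simp only [Set.mem_Ici]; linarith) (by simp only [Set.mem_Ici]; push_cast; nlinarith)
    push_cast; nlinarith [min_le_left ν 1]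
  have hΓ2 := Gamma_add_ge hs2 hμ0 hμ1
  have hpow : (ν * k) ^ μ ≤ (ν * k + b - 1 + μ) ^ μ :=
    Real.rpow_le_rpow (by linarith) (by linarith) hμ0.le
  have hΓs : 0 < Real.Gamma (ν * k + b) := Real.Gamma_pos_of_pos (by linarith)
  have hΓb : 0 < Real.Gamma (ν * (k+1) + b) := Real.Gamma_pos_of_pos (by push_cast; nlinarith)
  have main : 2 * x * Real.Gamma (ν * k + b) ≤ Real.Gamma (ν * (k+1) + b) := by
    calc 2 * x * Real.Gamma (ν * k + b) ≤ (ν*k) ^ μ * Real.Gamma (ν * k + b) := by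
          apply mul_le_mul_of_nonneg_right h2x hΓs.le
    _ ≤ Real.Gamma (ν * k + b + μ) := by nlinarith [hΓ2, hpow, hΓs]
    _ ≤ _ := hΓ1
  rw [Real.norm_of_nonneg (by positivity), Real.norm_of_nonneg (by positivity)]
  rcases hx.eq_or_lt with h0 | hxpos
  · rw [← h0]
    simp [zero_pow (Nat.succ_ne_zero k)]
    positivity
  · push_cast
    rw [div_le_iff₀ hΓb, pow_succ]
    calc x ^ k * x = 1/2 * (x ^ k / Real.Gamma (ν*k+b)) * (2 * x * Real.Gamma (ν*k+b)) := by
          field_simp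
    _ ≤ 1/2 * (x ^ k / Real.Gamma (ν*k+b)) * Real.Gamma (ν * (k+1) + b) := by
          apply mul_le_mul_of_nonneg_left main (by positivity)

theorem hille_tamarkin_constant_source (ν c : ℝ) (hν : 0 < ν) (hc : 0 < c) (N₀ : ℝ)
    (N : ℝ → ℝ) (hN : N = fun t => N₀ * mittagLeffler ν (-(c ^ ν) * t ^ ν)) :
    ∀ t : ℝ, 0 ≤ t → N t - N₀ = -(c ^ ν) * rlInt ν N t := by
  intro t ht
  have ha : 0 < c ^ ν := Real.rpow_pos_of_pos hc ν
  set a : ℝ := c ^ ν with ha_def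
  have hΓν : 0 < Real.Gamma ν := Real.Gamma_pos_of_pos hν
  rcases ht.eq_or_lt with rfl | ht'
  · -- t = 0
    have hml : mittagLeffler ν (-a * (0:ℝ) ^ ν) = 1 := by
      rw [Real.zero_rpow hν.ne', mul_zero]
      unfold mittagLeffler
      rw [tsum_eq_single 0 (fun b hb => by rw [zero_pow hb, zero_div])]
      norm_num [Real.Gamma_one]
    simp only [hN, hml, rlInt, intervalIntegral.integral_same]
    ring
  · -- 0 < t
    have hN_tsum : ∀ u : ℝ, 0 ≤ u →
        N u = N₀ * ∑' k : ℕ, (-a) ^ k * u ^ (ν * (k:ℝ)) / Real.Gamma (ν * k + 1) := by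
      intro u hu
      rw [hN]
      simp only
      congr 1
      unfold mittagLeffler
      refine tsum_congr fun k => ?_
      rw [mul_pow, ← Real.rpow_natCast (u ^ ν) k, ← Real.rpow_mul hu]
    -- the ML series at t
    set f : ℕ → ℝ := fun k => (-a) ^ k * t ^ (ν * (k:ℝ)) / Real.Gamma (ν * k + 1) with hf_def
    have habs : ∀ k : ℕ, |f k| = (a * t ^ ν) ^ k / Real.Gamma (ν * k + 1) := by
      intro k
      have hΓ : 0 < Real.Gamma (ν * k + 1) := Real.Gamma_pos_of_pos (by positivity)
      rw [hf_def]
      simp only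
      rw [abs_div, abs_mul, abs_pow, abs_neg, abs_of_pos ha, abs_of_pos hΓ,
        abs_of_pos (Real.rpow_pos_of_pos ht' _), mul_pow, ← Real.rpow_natCast (t ^ ν) k,
        ← Real.rpow_mul ht'.le]
    have hfsum : Summable f := by
      rw [← summable_abs_iff]
      have := ml_summable hν le_rfl (x := a * t ^ ν) (by positivity)
      exact this.congr (fun k => (habs k).symm)
    -- the family to integrate
    set F : ℕ → ℝ → ℝ := fun k u =>
      (N₀ * (-a) ^ k / Real.Gamma (ν * k + 1)) * (u ^ (ν * (k:ℝ)) * (t - u) ^ (ν - 1))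
      with hF_def
    have hint : ∀ k : ℕ, IntegrableOn (F k) (Set.Ioc 0 t) := by
      intro k
      have h := (beta_integrableOn (p := ν * k + 1) (q := ν) (by positivity) hν ht').const_mul
        (N₀ * (-a) ^ k / Real.Gamma (ν * k + 1))
      rw [show ν * (k:ℝ) + 1 - 1 = ν * k by ring] at h
      exact h
    have hB : ∀ k : ℕ, ∫ u in Set.Ioc (0:ℝ) t, u ^ (ν * (k:ℝ)) * (t - u) ^ (ν - 1)
        = Real.Gamma (ν * k + 1) * Real.Gamma ν / Real.Gamma (ν * k + 1 + ν)
          * t ^ (ν * k + ν) := by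
      intro k
      have h := beta_real (p := ν * k + 1) (q := ν) (by positivity) hν ht'
      rw [show ν * (k:ℝ) + 1 - 1 = ν * k by ring,
        show ν * (k:ℝ) + 1 + ν - 1 = ν * k + ν by ring] at h
      rw [← intervalIntegral.integral_of_le ht'.le]
      exact h
    have hFint : ∀ k : ℕ, ∫ u in Set.Ioc (0:ℝ) t, F k u
        = (N₀ * Real.Gamma ν) * ((-a) ^ k * t ^ (ν * (k:ℝ) + ν) / Real.Gamma (ν * k + ν + 1)) := by
      intro k
      have hΓ : Real.Gamma (ν * k + 1) ≠ 0 := (Real.Gamma_pos_of_pos (by positivity)).ne'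
      rw [hF_def]
      simp only
      rw [integral_const_mul, hB k, show ν * (k:ℝ) + 1 + ν = ν * k + ν + 1 by ring]
      field_simp
    have hnorm : ∀ k : ℕ, (∫ u in Set.Ioc (0:ℝ) t, ‖F k u‖)
        = (|N₀| * a ^ k / Real.Gamma (ν * k + 1)) *
          (Real.Gamma (ν * k + 1) * Real.Gamma ν / Real.Gamma (ν * k + 1 + ν)
            * t ^ (ν * k + ν)) := by
      intro k
      have hΓ : 0 < Real.Gamma (ν * k + 1) := Real.Gamma_pos_of_pos (by positivity)
      rw [← hB k, ← integral_const_mul]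
      refine setIntegral_congr_fun measurableSet_Ioc (fun u hu => ?_)
      rw [hF_def]
      simp only [Real.norm_eq_abs]
      rw [abs_mul, abs_mul, abs_div, abs_mul, abs_pow, abs_neg, abs_of_pos ha,
        abs_of_pos hΓ, abs_of_pos (Real.rpow_pos_of_pos hu.1 _),
        abs_of_nonneg (Real.rpow_nonneg (by linarith [hu.2] : (0:ℝ) ≤ t - u) _)]
    have hnormsum : Summable (fun k : ℕ => ∫ u in Set.Ioc (0:ℝ) t, ‖F k u‖) := by
      have hS : Summable (fun k : ℕ =>
          (|N₀| * Real.Gamma ν * t ^ ν) * ((a * t ^ ν) ^ k / Real.Gamma (ν * k + (1 + ν)))) :=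
        (ml_summable hν (by linarith) (x := a * t ^ ν) (by positivity)).mul_left _
      refine hS.congr fun k => ?_
      have hΓ : Real.Gamma (ν * k + 1) ≠ 0 := (Real.Gamma_pos_of_pos (by positivity)).ne'
      rw [hnorm k]
      rw [show ν * (k:ℝ) + 1 + ν = ν * k + (1 + ν) by ring, mul_pow,
        ← Real.rpow_natCast (t ^ ν) k, ← Real.rpow_mul ht'.le,
        show ν * (k:ℝ) + ν = ν * k + ν by ring, Real.rpow_add ht' (ν * k) ν]
      field_simp
    -- interchange
    have hinter := MeasureTheory.integral_tsum_of_summable_integral_norm hint hnormsum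
    have hpt : ∀ u ∈ Set.Ioc (0:ℝ) t, (t - u) ^ (ν - 1) * N u = ∑' k : ℕ, F k u := by
      intro u hu
      rw [hN_tsum u hu.1.le, show (t - u) ^ (ν - 1) *
          (N₀ * ∑' k : ℕ, (-a) ^ k * u ^ (ν * (k:ℝ)) / Real.Gamma (ν * k + 1))
        = ((t - u) ^ (ν - 1) * N₀) *
          ∑' k : ℕ, (-a) ^ k * u ^ (ν * (k:ℝ)) / Real.Gamma (ν * k + 1) by ring,
        ← tsum_mul_left]
      exact tsum_congr fun k => by rw [hF_def]; ring
    have hrl : rlInt ν N t = N₀ * ∑' k : ℕ,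
        (-a) ^ k * t ^ (ν * (k:ℝ) + ν) / Real.Gamma (ν * k + ν + 1) := by
      rw [rlInt, intervalIntegral.integral_of_le ht'.le,
        setIntegral_congr_fun measurableSet_Ioc hpt, ← hinter]
      rw [show (∑' k : ℕ, ∫ u in Set.Ioc (0:ℝ) t, F k u) = ∑' k : ℕ, (N₀ * Real.Gamma ν) *
          ((-a) ^ k * t ^ (ν * (k:ℝ) + ν) / Real.Gamma (ν * k + ν + 1)) from
        tsum_congr fun k => hFint k, tsum_mul_left]
      field_simp
    -- final algebra
    have hshift : ∀ k : ℕ, f (k + 1)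
        = -a * ((-a) ^ k * t ^ (ν * (k:ℝ) + ν) / Real.Gamma (ν * k + ν + 1)) := by
      intro k
      rw [hf_def]
      simp only
      push_cast
      rw [show ν * ((k:ℝ) + 1) = ν * k + ν by ring, pow_succ]
      ring
    have hsum_eq := hfsum.tsum_eq_zero_add
    have hf0 : f 0 = 1 := by
      rw [hf_def]
      norm_num [Real.Gamma_one]
    rw [hN_tsum t ht, hrl, hsum_eq, hf0]
    rw [show -a * (N₀ * ∑' k : ℕ, (-a) ^ k * t ^ (ν * (k:ℝ) + ν) / Real.Gamma (ν * k + ν + 1))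
        = N₀ * ∑' k : ℕ, -a * ((-a) ^ k * t ^ (ν * (k:ℝ) + ν) / Real.Gamma (ν * k + ν + 1)) by
      rw [tsum_mul_left]; ring,
      show (∑' k : ℕ, -a * ((-a) ^ k * t ^ (ν * (k:ℝ) + ν) / Real.Gamma (ν * k + ν + 1)))
        = ∑' k : ℕ, f (k + 1) from tsum_congr fun k => (hshift k).symm]
    ring
end

section
/- For n = 1 space dimension and 0 < α < 1, the series N(x,t) = (1/(2 t^{α/2})) ∑_{l=0}^∞ (-1)^l A^{l/2} / (Γ(1 - α(l+1)/2) · l!) with A = x²/t^α converges absolutely for every x ∈ ℝ and t > 0. -/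
set_option maxHeartbeats 1000000

open Filter Real

lemma aux_summable (s : ℝ) (hs : 0 ≤ s) :
    Summable (fun l : ℕ => s ^ l / (Nat.factorial (l / 3) : ℝ)) := by
  have hK : (0:ℝ) < s + 1 := by linarith
  have h0 : Tendsto (fun m : ℕ => ((s+1)^3) ^ m / (m.factorial : ℝ)) atTop (nhds 0) :=
    FloorSemiring.tendsto_pow_div_factorial_atTop _
  have h1 : ∀ᶠ m : ℕ in atTop, ((s+1)^3) ^ m / (m.factorial : ℝ) ≤ 1 := by
    filter_upwards [h0.eventually (eventually_le_nhds (by norm_num : (0:ℝ) < 1))] with m hm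
    exact hm
  obtain ⟨N, hN⟩ := h1.exists_forall_of_atTop
  refine Summable.of_norm_bounded_eventually_nat
    (g := fun l => (s+1)^2 * (s/(s+1))^l)
    (((summable_geometric_of_lt_one (by positivity) (by
        rw [div_lt_one hK]; linarith)).mul_left _)) ?_
  filter_upwards [eventually_ge_atTop (3 * N + 3)] with l hl
  have hm : N ≤ l / 3 := by omega
  have hfac : ((s+1)^3) ^ (l/3) ≤ ((l/3).factorial : ℝ) := by
    have := hN (l/3) hm
    rw [div_le_one (by positivity)] at this
    exact this
  have key : s ^ l / ((l/3).factorial : ℝ) ≤ (s+1)^2 * (s/(s+1))^l := by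
    have h2 : s ^ l / ((l/3).factorial : ℝ) ≤ s ^ l / ((s+1)^3) ^ (l/3) :=
      div_le_div_of_nonneg_left (by positivity) (by positivity) hfac
    refine h2.trans ?_
    have h3 : (s+1) ^ (l - 2) ≤ ((s+1)^3) ^ (l/3) := by
      rw [← pow_mul]
      exact pow_le_pow_right₀ (by linarith) (by omega)
    have h4 : s ^ l / ((s+1)^3) ^ (l/3) ≤ s ^ l / (s+1) ^ (l - 2) :=
      div_le_div_of_nonneg_left (by positivity) (by positivity) h3
    refine h4.trans ?_
    rw [div_pow, ← mul_div_assoc, div_le_div_iff₀ (by positivity) (by positivity)]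
    have hpow : (s+1)^2 * (s+1)^(l-2) = (s+1)^l := by
      rw [← pow_add]; congr 1; omega
    calc s ^ l * (s+1)^l = (s+1)^2 * s^l * (s+1)^(l-2) := by
          rw [mul_comm ((s+1)^2) _, mul_assoc, hpow]
    _ ≤ (s+1)^2 * s^l * (s+1)^(l-2) := le_refl _
  calc ‖s ^ l / ((l/3).factorial : ℝ)‖ = s ^ l / ((l/3).factorial : ℝ) := by
        rw [Real.norm_eq_abs, abs_of_nonneg (by positivity)]
  _ ≤ _ := key

theorem diffusion_series_abs_convergent (α : ℝ) (hα : 0 < α) (hα1 : α < 1)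
    (x t : ℝ) (ht : 0 < t) :
    Summable (fun l : ℕ =>
      |(-1 : ℝ) ^ l * (x ^ 2 / t ^ α) ^ ((l : ℝ) / 2) /
        (Real.Gamma (1 - α * (l + 1) / 2) * (l.factorial : ℝ))|) := by
  set A : ℝ := x ^ 2 / t ^ α with hAdef
  have hA : 0 ≤ A := div_nonneg (sq_nonneg x) (Real.rpow_pos_of_pos ht α).le
  set s : ℝ := A ^ (1/2 : ℝ) with hsdef
  have hs : 0 ≤ s := Real.rpow_nonneg hA _
  refine Summable.of_norm_bounded_eventually_nat
    (g := fun l => s ^ l / (Nat.factorial (l / 3) : ℝ)) (aux_summable s hs) ?_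
  filter_upwards [eventually_ge_atTop 12, eventually_ge_atTop ⌈4/α⌉₊] with l hl12 hlα
  simp only [Real.norm_eq_abs, abs_abs]
  set z : ℝ := α * (l + 1) / 2 with hzdef
  have hP : A ^ ((l:ℝ)/2) = s ^ l := by
    rw [hsdef, ← Real.rpow_natCast (A ^ ((1:ℝ)/2)) l, ← Real.rpow_mul hA]
    ring_nf
  have hPnn : 0 ≤ A ^ ((l:ℝ)/2) := Real.rpow_nonneg hA _
  have hFpos : (0:ℝ) < (l.factorial : ℝ) := by positivity
  have hgnn : (0:ℝ) ≤ s ^ l / (Nat.factorial (l / 3) : ℝ) := by positivity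
  have h4α : 4 / α ≤ (l : ℝ) := le_trans (Nat.le_ceil _) (Nat.cast_le.mpr hlα)
  have hz2 : 2 ≤ z := by
    rw [hzdef]
    have h4 : 4 ≤ (l:ℝ) * α := (div_le_iff₀ hα).mp h4α
    nlinarith
  have hzpos : 0 < z := by linarith
  have hΓz : 0 < Real.Gamma z := Real.Gamma_pos_of_pos hzpos
  set k : ℕ := l / 2 + 1 with hkdef
  have hkl : k ≤ l := by omega
  have hzk : z ≤ ((k : ℝ) + 1) := by
    have h1 : z ≤ ((l:ℝ) + 1) / 2 := by
      rw [hzdef]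
      have : α * ((l:ℝ) + 1) ≤ (l:ℝ) + 1 := by nlinarith [Nat.cast_nonneg (α := ℝ) l]
      linarith
    have hcast : (l:ℝ) + 1 ≤ 2 * ((l/2 : ℕ):ℝ) + 4 := by
      exact_mod_cast (by omega : l + 1 ≤ 2*(l/2)+4)
    have h2 : ((l:ℝ) + 1) / 2 ≤ (k : ℝ) + 1 := by
      rw [hkdef]; push_cast; linarith
    linarith
  have hΓzk : Real.Gamma z ≤ (k.factorial : ℝ) := by
    have hmono := Real.Gamma_strictMonoOn_Ici.monotoneOn
      (Set.mem_Ici.mpr hz2) (Set.mem_Ici.mpr (hz2.trans hzk)) hzk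
    rwa [Real.Gamma_nat_eq_factorial] at hmono
  have hfle' : (k.factorial : ℝ) * ((l-k).factorial : ℝ) ≤ (l.factorial : ℝ) := by
    exact_mod_cast Nat.le_of_dvd (Nat.factorial_pos l)
      (Nat.factorial_mul_factorial_dvd_factorial hkl)
  have hf3 : ((l/3).factorial : ℝ) ≤ ((l-k).factorial : ℝ) := by
    exact_mod_cast Nat.factorial_le (by omega : l/3 ≤ l - k)
  by_cases hΓ0 : Real.Gamma (1 - z) = 0
  · rw [hΓ0]
    simpa using hgnn
  · have habs : |(-1:ℝ)^l * A ^ ((l:ℝ)/2) / (Real.Gamma (1-z) * (l.factorial : ℝ))|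
        = A ^ ((l:ℝ)/2) / (|Real.Gamma (1-z)| * (l.factorial : ℝ)) := by
      rw [abs_div, abs_mul, abs_mul, abs_pow, abs_neg, abs_one, one_pow, one_mul,
        abs_of_nonneg hPnn, Nat.abs_cast]
    have hrefl := Real.Gamma_mul_Gamma_one_sub z
    have hsin : Real.sin (π * z) ≠ 0 := by
      intro h
      rw [h, div_zero, mul_eq_zero] at hrefl
      rcases hrefl with h' | h'
      · exact hΓz.ne' h'
      · exact hΓ0 h'
    have hΓval : Real.Gamma (1-z) = π / (Real.sin (π*z) * Real.Gamma z) := by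
      rw [eq_div_iff (mul_ne_zero hsin hΓz.ne')]
      have h6 : Real.Gamma z * Real.Gamma (1-z) * Real.sin (π*z) = π := by
        rw [hrefl, div_mul_cancel₀ _ hsin]
      linear_combination h6
    have hG1 : |Real.Gamma (1-z)| = π / (|Real.sin (π*z)| * Real.Gamma z) := by
      rw [hΓval, abs_div, abs_mul, abs_of_pos Real.pi_pos, abs_of_pos hΓz]
    have hsinpos : 0 < |Real.sin (π*z)| := abs_pos.mpr hsin
    have hG1pos : 0 < |Real.Gamma (1-z)| := abs_pos.mpr hΓ0
    have hinv : 1 / |Real.Gamma (1-z)| ≤ Real.Gamma z := by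
      rw [hG1, one_div_div]
      calc |Real.sin (π*z)| * Real.Gamma z / π ≤ Real.Gamma z / 1 := by
            apply div_le_div₀ hΓz.le ?_ one_pos (by linarith [Real.pi_gt_three])
            nlinarith [abs_sin_le_one (π*z)]
      _ = Real.Gamma z := div_one _
    have hlkpos : (0:ℝ) < ((l-k).factorial : ℝ) := by positivity
    calc |(-1:ℝ)^l * A ^ ((l:ℝ)/2) / (Real.Gamma (1-z) * (l.factorial : ℝ))|
        = A ^ ((l:ℝ)/2) / (|Real.Gamma (1-z)| * (l.factorial : ℝ)) := habs
      _ = A ^ ((l:ℝ)/2) * (1 / |Real.Gamma (1-z)|) / (l.factorial : ℝ) := by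
          rw [mul_one_div, div_div]
      _ ≤ A ^ ((l:ℝ)/2) * Real.Gamma z / (l.factorial : ℝ) := by gcongr
      _ ≤ A ^ ((l:ℝ)/2) * (k.factorial : ℝ) / (l.factorial : ℝ) := by gcongr
      _ ≤ A ^ ((l:ℝ)/2) / ((l-k).factorial : ℝ) := by
          rw [div_le_div_iff₀ hFpos hlkpos]
          calc A ^ ((l:ℝ)/2) * (k.factorial : ℝ) * ((l-k).factorial : ℝ)
              = A ^ ((l:ℝ)/2) * ((k.factorial : ℝ) * ((l-k).factorial : ℝ)) := by ring
            _ ≤ A ^ ((l:ℝ)/2) * (l.factorial : ℝ) :=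
                mul_le_mul_of_nonneg_left hfle' hPnn
      _ ≤ A ^ ((l:ℝ)/2) / ((l/3).factorial : ℝ) :=
          div_le_div_of_nonneg_left hPnn (by positivity) hf3
      _ = s ^ l / ((l/3).factorial : ℝ) := by rw [hP]
end
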